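/- Let 𝒢 be a transitive subgroup of S₅ and let 𝓗 ≤ 𝒢 be the stabilizer of the element 1 ∈ {1,2,3,4,5}. Then there is an isomorphism of 𝔽₂-vector spaces H¹(𝒢, G) ⊕ Hom(𝒢, 𝔽₂) ≅ Hom(𝓗, 𝔽₂), where Hom denotes the group of group homomorphisms to the additive group 𝔽₂ = ℤ/2. -/

import Mathlib

def Gsub : Submodule (ZMod 2) (Fin 5 → ZMod 2) where
  carrier := {v | ∑ i, v i = 0}
  add_mem' := by
    intro a b ha hb
    simp only [Set.mem_setOf_eq] at *
    simp [Finset.sum_add_distrib, ha, hb]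
  zero_mem' := by simp
  smul_mem' := by
    intro c a ha
    simp only [Set.mem_setOf_eq] at *
    simp [← Finset.mul_sum, ha]

/-- The group of `1`-cocycles of `𝒢` with values in `G`. -/
def cocycles (𝒢 : Subgroup (Equiv.Perm (Fin 5))) : AddSubgroup (𝒢 → Fin 5 → ZMod 2) where
  carrier := {f | (∀ g, f g ∈ Gsub) ∧
    ∀ g h : 𝒢, f (g * h) = f g + fun j => f h ((g : Equiv.Perm (Fin 5))⁻¹ j)}
  zero_mem' := by
    refine ⟨fun g => Gsub.zero_mem, fun g h => ?_⟩
    funext j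
    simp
  add_mem' := by
    rintro a b ⟨ha1, ha2⟩ ⟨hb1, hb2⟩
    refine ⟨fun g => Gsub.add_mem (ha1 g) (hb1 g), fun g h => ?_⟩
    funext j
    simp only [Pi.add_apply, ha2 g h, hb2 g h]
    ring
  neg_mem' := by
    rintro a ⟨ha1, ha2⟩
    refine ⟨fun g => Gsub.neg_mem (ha1 g), fun g h => ?_⟩
    funext j
    simp only [Pi.neg_apply, Pi.add_apply, ha2 g h]
    ring

/-- The group of `1`-coboundaries of `𝒢` with values in `G`. -/
def coboundaries (𝒢 : Subgroup (Equiv.Perm (Fin 5))) : AddSubgroup (𝒢 → Fin 5 → ZMod 2) where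
  carrier := {f | ∃ x ∈ Gsub, ∀ g : 𝒢,
    f g = (fun j => x ((g : Equiv.Perm (Fin 5))⁻¹ j)) - x}
  zero_mem' := ⟨0, Gsub.zero_mem, fun g => by funext j; simp⟩
  add_mem' := by
    rintro a b ⟨x, hx, ha⟩ ⟨y, hy, hb⟩
    refine ⟨x + y, Gsub.add_mem hx hy, fun g => ?_⟩
    funext j
    simp only [Pi.add_apply, ha g, hb g, Pi.sub_apply]
    ring
  neg_mem' := by
    rintro a ⟨x, hx, ha⟩
    refine ⟨-x, Gsub.neg_mem hx, fun g => ?_⟩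
    funext j
    simp only [Pi.neg_apply, Pi.sub_apply, ha g]
    ring


section Aux

open Finset

variable (𝒢 : Subgroup (Equiv.Perm (Fin 5)))

local notation "𝓗" => MulAction.stabilizer 𝒢 (0 : Fin 5)

lemma mem_Gsub_iff (x : Fin 5 → ZMod 2) : x ∈ Gsub ↔ ∑ i, x i = 0 := Iff.rfl

lemma mem_cocycles_iff (f : 𝒢 → Fin 5 → ZMod 2) :
    f ∈ cocycles 𝒢 ↔ (∀ g, f g ∈ Gsub) ∧
      ∀ g h : 𝒢, f (g * h) = f g + fun j => f h ((g : Equiv.Perm (Fin 5))⁻¹ j) := Iff.rfl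

lemma mem_coboundaries_iff (f : 𝒢 → Fin 5 → ZMod 2) :
    f ∈ coboundaries 𝒢 ↔ ∃ x ∈ Gsub, ∀ g : 𝒢,
      f g = (fun j => x ((g : Equiv.Perm (Fin 5))⁻¹ j)) - x := Iff.rfl

lemma stab_inv_apply (h : 𝓗) : ((h : 𝒢) : Equiv.Perm (Fin 5))⁻¹ 0 = 0 := by
  have := h.2
  rw [MulAction.mem_stabilizer_iff] at this
  have h0 : ((h : 𝒢) : Equiv.Perm (Fin 5)) 0 = 0 := this
  exact (Equiv.Perm.inv_eq_iff_eq.mpr h0.symm)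

lemma cocycle_apply_mul (f : cocycles 𝒢) (g h : 𝒢) (j : Fin 5) :
    f.1 (g * h) j = f.1 g j + f.1 h ((g : Equiv.Perm (Fin 5))⁻¹ j) := by
  have := f.2.2 g h
  rw [this]; rfl

lemma cocycle_apply_one (f : cocycles 𝒢) (j : Fin 5) : f.1 1 j = 0 := by
  have := cocycle_apply_mul 𝒢 f 1 1 j
  simp only [mul_one] at this
  have h2 : ((1 : 𝒢) : Equiv.Perm (Fin 5))⁻¹ j = j := by simp
  rw [h2] at this
  exact left_eq_add.mp this

/-- Evaluation of a cocycle at the stabilizer: the Shapiro map. -/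
def evCocycle (f : cocycles 𝒢) : 𝓗 →* Multiplicative (ZMod 2) where
  toFun h := Multiplicative.ofAdd (f.1 h 0)
  map_one' := by
    rw [show ((1 : 𝓗) : 𝒢) = 1 from rfl, cocycle_apply_one]
    rfl
  map_mul' h k := by
    rw [show ((h * k : 𝓗) : 𝒢) = (h : 𝒢) * (k : 𝒢) from rfl,
      cocycle_apply_mul, stab_inv_apply]
    rfl

def evHom : cocycles 𝒢 →+ Additive (𝓗 →* Multiplicative (ZMod 2)) :=
  AddMonoidHom.mk' (fun f => Additive.ofMul (evCocycle 𝒢 f)) (by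
    intro f g
    apply Additive.toMul.injective
    ext h
    show Multiplicative.ofAdd ((f.1 + g.1) (↑h) 0) = _
    simp only [Pi.add_apply]
    rfl)

def resHom : Additive (𝒢 →* Multiplicative (ZMod 2)) →+
    Additive (𝓗 →* Multiplicative (ZMod 2)) :=
  AddMonoidHom.mk' (fun χ => Additive.ofMul ((Additive.toMul χ).comp (MulAction.stabilizer 𝒢 (0 : Fin 5)).subtype)) (by
    intro a b
    apply Additive.toMul.injective
    ext h
    rfl)

lemma coboundaries_le_ker :
    (coboundaries 𝒢).addSubgroupOf (cocycles 𝒢) ≤ (evHom 𝒢).ker := by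
  intro f hmem
  rw [AddSubgroup.mem_addSubgroupOf] at hmem
  obtain ⟨x, hx, hfx⟩ := hmem
  rw [AddMonoidHom.mem_ker]
  apply Additive.toMul.injective
  ext h
  show Multiplicative.ofAdd (f.1 (↑h) 0) = 1
  have hc := congrFun (hfx h) 0
  simp only [Pi.sub_apply, stab_inv_apply, sub_self] at hc
  rw [hc]
  rfl

/-- The full map. -/
noncomputable def ΨHom :
    ((cocycles 𝒢 ⧸ (coboundaries 𝒢).addSubgroupOf (cocycles 𝒢)) ×
      Additive (𝒢 →* Multiplicative (ZMod 2))) →+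
    Additive (𝓗 →* Multiplicative (ZMod 2)) :=
  (QuotientAddGroup.lift _ (evHom 𝒢) (coboundaries_le_ker 𝒢)).coprod (resHom 𝒢)


lemma coe_smul (g : 𝒢) (x : Fin 5) : g • x = (g : Equiv.Perm (Fin 5)) x := rfl

variable (σ : Fin 5 → 𝒢) (hσ : ∀ j, ((σ j : Equiv.Perm (Fin 5))) 0 = j)

include hσ

lemma sigma_inv_apply (j : Fin 5) : ((σ j : Equiv.Perm (Fin 5)))⁻¹ j = 0 :=
  Equiv.Perm.inv_eq_iff_eq.mpr (hσ j).symm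

/-- The element `(σ j)⁻¹ g σ (g⁻¹ j)` of the stabilizer of `0`. -/
def wElt (g : 𝒢) (j : Fin 5) : 𝓗 :=
  ⟨(σ j)⁻¹ * g * σ ((g : Equiv.Perm (Fin 5))⁻¹ j), by
    rw [MulAction.mem_stabilizer_iff, coe_smul]
    rw [Subgroup.coe_mul, Subgroup.coe_mul, Subgroup.coe_inv]
    rw [Equiv.Perm.mul_apply, Equiv.Perm.mul_apply, hσ,
      show ((g : Equiv.Perm (Fin 5))) (((g : Equiv.Perm (Fin 5)))⁻¹ j) = j by simp]
    exact sigma_inv_apply 𝒢 σ hσ j⟩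

lemma wElt_mul (g h : 𝒢) (j : Fin 5) :
    wElt 𝒢 σ hσ (g * h) j =
      wElt 𝒢 σ hσ g j * wElt 𝒢 σ hσ h ((g : Equiv.Perm (Fin 5))⁻¹ j) := by
  apply Subtype.ext
  show (σ j)⁻¹ * (g * h) * σ (((g * h : 𝒢) : Equiv.Perm (Fin 5))⁻¹ j) = _
  have hk : ((g * h : 𝒢) : Equiv.Perm (Fin 5))⁻¹ j
      = ((h : Equiv.Perm (Fin 5)))⁻¹ (((g : Equiv.Perm (Fin 5)))⁻¹ j) := by
    push_cast
    rw [mul_inv_rev]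
    rfl
  rw [hk]
  show _ = ((σ j)⁻¹ * g * σ (((g : Equiv.Perm (Fin 5)))⁻¹ j)) *
    ((σ (((g : Equiv.Perm (Fin 5)))⁻¹ j))⁻¹ * h *
      σ (((h : Equiv.Perm (Fin 5)))⁻¹ (((g : Equiv.Perm (Fin 5)))⁻¹ j)))
  group

lemma wElt_one (j : Fin 5) : wElt 𝒢 σ hσ 1 j = 1 := by
  apply Subtype.ext
  show (σ j)⁻¹ * 1 * σ (((1 : 𝒢) : Equiv.Perm (Fin 5))⁻¹ j) = 1
  have : ((1 : 𝒢) : Equiv.Perm (Fin 5))⁻¹ j = j := by simp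
  rw [this]
  group

omit hσ

lemma zmod2_add_self (a : ZMod 2) : a + a = 0 := by revert a; decide
lemma zmod2_neg (a : ZMod 2) : -a = a := by revert a; decide
lemma zmod2_five_smul (a : ZMod 2) : 5 • a = a := by revert a; decide


lemma zmod2_sub_lem (a b s : ZMod 2) : a + b = (b + s) - (a + s) := by revert a b s; decide

include hσ

lemma psihom_surj (hσ0 : σ 0 = 1) : Function.Surjective (ΨHom 𝒢) := by
  intro ψa
  set F : 𝒢 → Fin 5 → ZMod 2 :=
    fun g j => Multiplicative.toAdd (Additive.toMul ψa (wElt 𝒢 σ hσ g j)) with hF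
  have hFmul : ∀ g h j, F (g * h) j = F g j + F h ((g : Equiv.Perm (Fin 5))⁻¹ j) := by
    intro g h j
    simp only [hF]
    rw [wElt_mul 𝒢 σ hσ, map_mul]
    rfl
  set S : 𝒢 → ZMod 2 := fun g => ∑ j, F g j with hS
  have hSmul : ∀ g h, S (g * h) = S g + S h := by
    intro g h
    simp only [hS]
    calc ∑ j, F (g * h) j
        = ∑ j, (F g j + F h ((g : Equiv.Perm (Fin 5))⁻¹ j)) :=
          Finset.sum_congr rfl (fun j _ => hFmul g h j)
      _ = ∑ j, F g j + ∑ j, F h ((g : Equiv.Perm (Fin 5))⁻¹ j) := Finset.sum_add_distrib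
      _ = ∑ j, F g j + ∑ j, F h j := by
          rw [Equiv.sum_comp ((g : Equiv.Perm (Fin 5))⁻¹) (F h)]
  set f₀ : 𝒢 → Fin 5 → ZMod 2 := fun g j => F g j + S g with hf₀def
  have hf₀ : f₀ ∈ cocycles 𝒢 := by
    constructor
    · intro g
      rw [mem_Gsub_iff]
      show ∑ j, (F g j + S g) = 0
      rw [Finset.sum_add_distrib, Finset.sum_const]
      simp only [Finset.card_univ, Fintype.card_fin]
      rw [zmod2_five_smul]
      exact zmod2_add_self _
    · intro g h
      funext j
      show F (g * h) j + S (g * h) = f₀ g j + f₀ h ((g : Equiv.Perm (Fin 5))⁻¹ j)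
      rw [hFmul g h j, hSmul g h]
      show _ = (F g j + S g) + (F h ((g : Equiv.Perm (Fin 5))⁻¹ j) + S h)
      ring
  set χ₀ : 𝒢 →* Multiplicative (ZMod 2) :=
    MonoidHom.mk' (fun g => Multiplicative.ofAdd (S g)) (fun g h => by
      show Multiplicative.ofAdd (S (g * h)) = Multiplicative.ofAdd (S g) * Multiplicative.ofAdd (S h)
      rw [hSmul g h]; rfl)
    with hχ₀
  refine ⟨(QuotientAddGroup.mk ⟨f₀, hf₀⟩, Additive.ofMul χ₀), ?_⟩
  apply Additive.toMul.injective
  ext h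
  show Multiplicative.ofAdd (f₀ (↑h) 0) * Multiplicative.ofAdd (S ↑h)
      = Additive.toMul ψa h
  show Multiplicative.ofAdd ((F (↑h) 0 + S ↑h) + S ↑h) = Additive.toMul ψa h
  rw [add_assoc, zmod2_add_self, add_zero]
  have hwh : wElt 𝒢 σ hσ (↑h) 0 = h := by
    apply Subtype.ext
    show (σ 0)⁻¹ * (↑h) * σ (((h : 𝒢) : Equiv.Perm (Fin 5))⁻¹ 0) = (h : 𝒢)
    rw [stab_inv_apply 𝒢 h, hσ0]
    group
  show Multiplicative.ofAdd
      (Multiplicative.toAdd (Additive.toMul ψa (wElt 𝒢 σ hσ (↑h) 0))) = Additive.toMul ψa h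
  rw [hwh]
  rfl

lemma psihom_inj (_hσ0 : σ 0 = 1) : Function.Injective (ΨHom 𝒢) := by
  rw [injective_iff_map_eq_zero]
  rintro ⟨q, χ⟩ h0
  obtain ⟨f, rfl⟩ := QuotientAddGroup.mk_surjective q
  have hpt : ∀ h : MulAction.stabilizer 𝒢 (0 : Fin 5),
      f.1 (↑h) 0 + Multiplicative.toAdd (Additive.toMul χ ↑h) = 0 := by
    intro h
    have h1 := congrArg (fun φ : Additive ((MulAction.stabilizer 𝒢 (0 : Fin 5)) →* Multiplicative (ZMod 2)) =>
      Multiplicative.toAdd (Additive.toMul φ h)) h0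
    exact h1
  set χ' : 𝒢 → ZMod 2 := fun g => Multiplicative.toAdd (Additive.toMul χ g) with hχ'
  have hχmul : ∀ g h : 𝒢, χ' (g * h) = χ' g + χ' h := by
    intro g h
    simp only [hχ']
    rw [map_mul]
    rfl
  have hχone : χ' 1 = 0 := by
    simp only [hχ']
    rw [map_one]
    rfl
  set F : 𝒢 → Fin 5 → ZMod 2 := fun g j => f.1 g j + χ' g with hF
  have hFmul : ∀ g h j, F (g * h) j = F g j + F h ((g : Equiv.Perm (Fin 5))⁻¹ j) := by
    intro g h j
    simp only [hF]
    rw [cocycle_apply_mul 𝒢 f g h j, hχmul g h]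
    ring
  have hF1 : ∀ j, F 1 j = 0 := by
    intro j
    simp only [hF]
    rw [cocycle_apply_one 𝒢 f j, hχone, add_zero]
  have hFstab : ∀ h : MulAction.stabilizer 𝒢 (0 : Fin 5), F (↑h) 0 = 0 := hpt
  set x : Fin 5 → ZMod 2 := fun j => F (σ j) j with hx
  have hsiginv : ∀ k : Fin 5, F ((σ k)⁻¹) 0 = x k := by
    intro k
    have h1 := hFmul (σ k) ((σ k)⁻¹) k
    rw [mul_inv_cancel, hF1 k, sigma_inv_apply 𝒢 σ hσ] at h1
    have h2 := eq_neg_of_add_eq_zero_right h1.symm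
    rw [zmod2_neg] at h2
    exact h2.symm ▸ rfl
  have key : ∀ (g : 𝒢) (j : Fin 5), F g j = x j + x ((g : Equiv.Perm (Fin 5))⁻¹ j) := by
    intro g j
    have hdecomp : g = σ j * ((↑(wElt 𝒢 σ hσ g j)) * (σ ((g : Equiv.Perm (Fin 5))⁻¹ j))⁻¹) := by
      show g = σ j * (((σ j)⁻¹ * g * σ ((g : Equiv.Perm (Fin 5))⁻¹ j)) *
        (σ ((g : Equiv.Perm (Fin 5))⁻¹ j))⁻¹)
      group
    have e1 : F g j = F (σ j) j +
        F ((↑(wElt 𝒢 σ hσ g j)) * (σ ((g : Equiv.Perm (Fin 5))⁻¹ j))⁻¹)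
          (((σ j : 𝒢) : Equiv.Perm (Fin 5))⁻¹ j) := by
      conv_lhs => rw [hdecomp]
      exact hFmul _ _ j
    rw [sigma_inv_apply 𝒢 σ hσ] at e1
    have e2 := hFmul (↑(wElt 𝒢 σ hσ g j)) ((σ ((g : Equiv.Perm (Fin 5))⁻¹ j))⁻¹) 0
    rw [stab_inv_apply 𝒢 (wElt 𝒢 σ hσ g j), hFstab (wElt 𝒢 σ hσ g j), zero_add,
      hsiginv ((g : Equiv.Perm (Fin 5))⁻¹ j)] at e2
    rw [e2] at e1
    exact e1
  have hχ0 : ∀ g : 𝒢, χ' g = 0 := by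
    intro g
    have hsum1 : ∑ j, F g j = χ' g := by
      show ∑ j, (f.1 g j + χ' g) = χ' g
      rw [Finset.sum_add_distrib, (mem_Gsub_iff _).mp (f.2.1 g), Finset.sum_const]
      simp only [Finset.card_univ, Fintype.card_fin]
      rw [zmod2_five_smul, zero_add]
    have hsum2 : ∑ j, F g j = 0 := by
      calc ∑ j, F g j = ∑ j, (x j + x ((g : Equiv.Perm (Fin 5))⁻¹ j)) :=
            Finset.sum_congr rfl (fun j _ => key g j)
        _ = ∑ j, x j + ∑ j, x ((g : Equiv.Perm (Fin 5))⁻¹ j) := Finset.sum_add_distrib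
        _ = ∑ j, x j + ∑ j, x j := by rw [Equiv.sum_comp ((g : Equiv.Perm (Fin 5))⁻¹) x]
        _ = 0 := zmod2_add_self _
    rw [← hsum1, hsum2]
  have hχzero : χ = 0 := by
    apply Additive.toMul.injective
    ext g
    exact Multiplicative.toAdd.injective (hχ0 g)
  have hfcob : f.1 ∈ coboundaries 𝒢 := by
    refine ⟨(fun j => x j + ∑ i, x i), ?_, ?_⟩
    · rw [mem_Gsub_iff]
      rw [Finset.sum_add_distrib, Finset.sum_const]
      simp only [Finset.card_univ, Fintype.card_fin]
      rw [zmod2_five_smul]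
      exact zmod2_add_self _
    · intro g
      funext j
      have hf' : f.1 g j = F g j := by
        simp only [hF]
        rw [hχ0 g, add_zero]
      rw [hf', key g j, Pi.sub_apply]
      exact zmod2_sub_lem _ _ _
  have hq : (QuotientAddGroup.mk f :
      cocycles 𝒢 ⧸ (coboundaries 𝒢).addSubgroupOf (cocycles 𝒢)) = 0 := by
    rw [QuotientAddGroup.eq_zero_iff, AddSubgroup.mem_addSubgroupOf]
    exact hfcob
  rw [Prod.ext_iff]
  exact ⟨hq, hχzero⟩

end Aux

/-- Let `𝒢` be a transitive subgroup of `S₅` and `𝓗 ≤ 𝒢` the stabilizer of a point.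
Then `H¹(𝒢, G) ⊕ Hom(𝒢, 𝔽₂) ≅ Hom(𝓗, 𝔽₂)` (an isomorphism of elementary abelian
`2`-groups, i.e. of `𝔽₂`-vector spaces). Here `H¹(𝒢, G)` is the quotient of `1`-cocycles
by `1`-coboundaries, and `Hom(A, 𝔽₂)` is the group of homomorphisms `A → ℤ/2`. -/
theorem stmt5 (𝒢 : Subgroup (Equiv.Perm (Fin 5)))
    (htrans : ∀ i j : Fin 5, ∃ π ∈ 𝒢, π i = j) :
    Nonempty (
      ((cocycles 𝒢 ⧸ (coboundaries 𝒢).addSubgroupOf (cocycles 𝒢)) ×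
        Additive (𝒢 →* Multiplicative (ZMod 2))) ≃+
      Additive ((MulAction.stabilizer 𝒢 (0 : Fin 5)) →* Multiplicative (ZMod 2))) := by
  choose π hmem happ using fun j => htrans 0 j
  let σ : Fin 5 → 𝒢 := fun j => if hj : j = (0 : Fin 5) then 1 else ⟨π j, hmem j⟩
  have hσ : ∀ j, ((σ j : Equiv.Perm (Fin 5))) 0 = j := by
    intro j
    by_cases hj : j = 0
    · subst hj; simp [σ]
    · simp only [σ, dif_neg hj]
      exact happ j
  have hσ0 : σ 0 = 1 := by simp [σ]
  exact ⟨AddEquiv.ofBijective (ΨHom 𝒢)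
    ⟨psihom_inj 𝒢 σ hσ hσ0, psihom_surj 𝒢 σ hσ hσ0⟩⟩
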